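/- Let u ∈ ℬ(ℝⁿ). Then for each δ > 0, (u*((1+δ)x) − u*(x))/‖x‖ → +∞ as ‖x‖ → ∞. -/

import Mathlib

open Filter
open scoped BigOperators Topology

noncomputable section

abbrev En (n : ℕ) := EuclideanSpace ℝ (Fin n)

/-- The closed positive orthant `[0,∞)ⁿ`. -/
def orthant (n : ℕ) : Set (En n) := {x | ∀ j, 0 ≤ x j}

/-- `g[e]`, the coordinatewise exponential substitution `g[e](x) = g(e^{x₁},…,e^{xₙ})`. -/
def expComp {n : ℕ} (g : En n → ℝ) : En n → ℝ := fun x => g (WithLp.toLp 2 (fun j => Real.exp (x j)))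

/-- The Young–Fenchel conjugate `g*(x) = sup_y (⟨x,y⟩ - g(y))`. -/
def starC {n : ℕ} (g : En n → ℝ) (x : En n) : ℝ := ⨆ y : En n, (∑ j, x j * y j - g y)

/-- `g ∈ ℬ(ℝⁿ)`: `g` is continuous on `ℝⁿ` and `g(x)/‖x‖ → +∞` as `x → ∞`. -/
def memBR {n : ℕ} (g : En n → ℝ) : Prop :=
  Continuous g ∧ Tendsto (fun x : En n => g x / ‖x‖) (cocompact (En n)) atTop

lemma sum_mul_eq_inner {n : ℕ} (x y : En n) :
    ∑ j, x j * y j = (inner ℝ x y : ℝ) := by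
  simp [PiLp.inner_apply, RCLike.inner_apply, mul_comm]

lemma superlin {n : ℕ} {u : En n → ℝ} (hu : memBR u) (M : ℝ) :
    ∃ C : ℝ, 0 ≤ C ∧ ∀ y, M * ‖y‖ - C ≤ u y := by
  have h := hu.2.eventually (eventually_ge_atTop M)
  obtain ⟨K, hK, hKs⟩ := mem_cocompact.mp h
  obtain ⟨r, hr⟩ := hK.isBounded.subset_closedBall 0
  set r' := max r 1 with hr'
  have hB : IsCompact (Metric.closedBall (0 : En n) r') := isCompact_closedBall _ _
  have hne : (Metric.closedBall (0 : En n) r').Nonempty :=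
    ⟨0, by simp [hr', le_trans zero_le_one (le_max_right r 1)]⟩
  have hcont : Continuous fun y : En n => M * ‖y‖ - u y :=
    (continuous_const.mul continuous_norm).sub hu.1
  obtain ⟨y0, _, hmax0⟩ := hB.exists_isMaxOn hne hcont.continuousOn
  have hmax : ∀ y ∈ Metric.closedBall (0 : En n) r', M * ‖y‖ - u y ≤ M * ‖y0‖ - u y0 :=
    fun y hy => hmax0 hy
  refine ⟨max (M * ‖y0‖ - u y0) 0, le_max_right _ _, fun y => ?_⟩
  by_cases hy : y ∈ Metric.closedBall (0 : En n) r'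
  · have := hmax y hy
    linarith [le_max_left (M * ‖y0‖ - u y0) (0:ℝ)]
  · have hyn : r' < ‖y‖ := by
      simpa [Metric.mem_closedBall, dist_zero_right, not_le] using hy
    have hy0 : (0:ℝ) < ‖y‖ := lt_of_lt_of_le (lt_of_lt_of_le zero_lt_one (le_max_right r 1)) hyn.le
    have hyK : y ∉ K := fun hmem => by
      have := hr hmem
      simp [Metric.mem_closedBall, dist_zero_right] at this
      have : ‖y‖ ≤ r' := le_trans this (le_max_left r 1)
      linarith
    have hMy : M ≤ u y / ‖y‖ := hKs hyK
    have : M * ‖y‖ ≤ u y := by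
      rw [le_div_iff₀ hy0] at hMy
      linarith
    linarith [le_max_right (M * ‖y0‖ - u y0) (0:ℝ)]

lemma bddStar {n : ℕ} {u : En n → ℝ} (hu : memBR u) (z : En n) :
    BddAbove (Set.range fun y : En n => ∑ j, z j * y j - u y) := by
  obtain ⟨C, _, hC⟩ := superlin hu ‖z‖
  refine ⟨C, ?_⟩
  rintro _ ⟨y, rfl⟩
  have h1 : ∑ j, z j * y j ≤ ‖z‖ * ‖y‖ := by
    rw [sum_mul_eq_inner]; exact real_inner_le_norm z y
  have := hC y
  simp only
  linarith

lemma le_starC {n : ℕ} {u : En n → ℝ} (hu : memBR u) (z y : En n) :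
    ∑ j, z j * y j - u y ≤ starC u z :=
  le_ciSup (bddStar hu z) y

theorem stmt11 (n : ℕ) (u : En n → ℝ) (hu : memBR u) :
    ∀ δ > (0:ℝ),
      Tendsto (fun x : En n => (starC u ((1 + δ) • x) - starC u x) / ‖x‖)
        (cocompact (En n)) atTop := by
  intro δ hδ
  rw [tendsto_atTop]
  intro b
  set R : ℝ := (max b 0 + 1) / δ with hR
  have hRpos : 0 < R := by positivity
  have hδR : b + 1 ≤ δ * R := by
    rw [hR, mul_div_cancel₀ _ (ne_of_gt hδ)]
    have := le_max_left b 0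
    linarith
  -- bound of u on closed ball R
  obtain ⟨y1, _, hy10⟩ := (isCompact_closedBall (0:En n) R).exists_isMaxOn
    ⟨0, by simp [hRpos.le]⟩ hu.1.continuousOn
  have hy1 : ∀ y ∈ Metric.closedBall (0:En n) R, u y ≤ u y1 := fun y hy => hy10 hy
  set Cu : ℝ := u y1
  set s0 : ℝ := starC u 0
  have h1δ : (0:ℝ) < 1 + δ := by linarith
  -- convexity inequality: starC u x ≤ 1/(1+δ) * starC u ((1+δ)•x) + δ/(1+δ) * s0
  have hconv : ∀ x : En n,
      starC u x ≤ (1/(1+δ)) * starC u ((1+δ) • x) + (δ/(1+δ)) * s0 := by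
    intro x
    apply ciSup_le
    intro y
    have hA : ∑ j, ((1+δ) • x) j * y j - u y ≤ starC u ((1+δ) • x) := le_starC hu _ y
    have hB : ∑ j, (0:En n) j * y j - u y ≤ s0 := le_starC hu 0 y
    have hsmul : ∀ j, ((1+δ) • x) j = (1+δ) * x j := fun j => rfl
    have hzero : ∀ j, (0:En n) j = 0 := fun j => rfl
    have hsum : ∑ j, ((1+δ) • x) j * y j = (1+δ) * ∑ j, x j * y j := by
      rw [Finset.mul_sum]; exact Finset.sum_congr rfl fun j _ => by rw [hsmul]; ring
    have hsum0 : ∑ j, (0:En n) j * y j = 0 := by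
      apply Finset.sum_eq_zero; intro j _; rw [hzero]; ring
    rw [hsum] at hA
    rw [hsum0] at hB
    have e1 : ∑ j, x j * y j - u y =
        (1/(1+δ)) * ((1+δ) * ∑ j, x j * y j - u y) + (δ/(1+δ)) * (0 - u y) := by
      field_simp
      ring
    rw [e1]
    have l1 : (1/(1+δ)) * ((1+δ) * ∑ j, x j * y j - u y) ≤ (1/(1+δ)) * starC u ((1+δ) • x) := by
      apply mul_le_mul_of_nonneg_left hA
      positivity
    have l2 : (δ/(1+δ)) * (0 - u y) ≤ (δ/(1+δ)) * s0 := by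
      apply mul_le_mul_of_nonneg_left hB
      positivity
    linarith
  -- lower bound for starC u ((1+δ)•x)
  have hlow : ∀ x : En n, x ≠ 0 →
      (1+δ) * R * ‖x‖ - Cu ≤ starC u ((1+δ) • x) := by
    intro x hx
    have hxn : (0:ℝ) < ‖x‖ := norm_pos_iff.mpr hx
    set y : En n := (R / ‖x‖) • x with hy
    have hyn : ‖y‖ = R := by
      rw [hy, norm_smul]
      rw [Real.norm_eq_abs, abs_of_pos (by positivity)]
      field_simp
    have hymem : y ∈ Metric.closedBall (0:En n) R := by
      simp [Metric.mem_closedBall, dist_zero_right, hyn]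
    have huy : u y ≤ Cu := hy1 y hymem
    have hsum : ∑ j, ((1+δ) • x) j * y j = (1+δ) * R * ‖x‖ := by
      have : ∀ j, ((1+δ) • x) j * y j = ((1+δ) * (R / ‖x‖)) * (x j * x j) := by
        intro j
        show ((1+δ) * x j) * ((R / ‖x‖) * x j) = _
        ring
      rw [Finset.sum_congr rfl fun j _ => this j, ← Finset.mul_sum]
      have hxx : ∑ j, x j * x j = ‖x‖ ^ 2 := by
        rw [sum_mul_eq_inner, real_inner_self_eq_norm_sq]
      rw [hxx]
      field_simp
    have := le_starC hu ((1+δ) • x) y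
    rw [hsum] at this
    linarith
  -- put together, eventually
  set T : ℝ := max 1 ((δ/(1+δ)) * |Cu + s0|) with hT
  filter_upwards [tendsto_norm_cocompact_atTop.eventually (eventually_ge_atTop T)] with x hx
  have hT1 : (1:ℝ) ≤ ‖x‖ := le_trans (le_max_left _ _) hx
  have hxn : (0:ℝ) < ‖x‖ := lt_of_lt_of_le zero_lt_one hT1
  have hx0 : x ≠ 0 := by
    intro h; rw [h, norm_zero] at hxn; exact lt_irrefl 0 hxn
  have key : δ * R * ‖x‖ - (δ/(1+δ)) * (Cu + s0) ≤
      starC u ((1+δ) • x) - starC u x := by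
    have h1 := hconv x
    have h2 := hlow x hx0
    have : starC u ((1+δ) • x) - starC u x ≥
        (δ/(1+δ)) * (starC u ((1+δ) • x) - s0) := by
      have : starC u ((1+δ) • x) - (1/(1+δ)) * starC u ((1+δ) • x) =
          (δ/(1+δ)) * starC u ((1+δ) • x) := by field_simp; ring
      nlinarith
    have h3 : (δ/(1+δ)) * ((1+δ) * R * ‖x‖ - Cu - s0) ≤
        (δ/(1+δ)) * (starC u ((1+δ) • x) - s0) := by
      apply mul_le_mul_of_nonneg_left (by linarith) (by positivity)
    have h4 : (δ/(1+δ)) * ((1+δ) * R * ‖x‖ - Cu - s0) =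
        δ * R * ‖x‖ - (δ/(1+δ)) * (Cu + s0) := by field_simp; ring
    linarith
  rw [le_div_iff₀ hxn]
  have habs : (δ/(1+δ)) * (Cu + s0) ≤ (δ/(1+δ)) * |Cu + s0| := by
    apply mul_le_mul_of_nonneg_left (le_abs_self _) (by positivity)
  have hTx : (δ/(1+δ)) * |Cu + s0| ≤ ‖x‖ := le_trans (le_max_right 1 _) hx
  nlinarith [hδR, hxn, hT1]
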